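/- In the enhanced conflict graph G_{K,N} of a K×N switch with all unicasts and one broadcast per input, the subgraph induced by the unicast vertices to a single output i together with all broadcast subflow vertices (to all outputs) is perfect. -/

import Mathlib

open Pointwise

/-- Vertices of the enhanced conflict graph of a `K × N` switch loaded with all
unicasts and one broadcast per input: `u i j` is the unicast subflow from input
`i` to output `j`, and `b i j` is the broadcast subflow from input `i` to
output `j`. -/
inductive SwitchVertex (K N : ℕ) where
  | u : Fin K → Fin N → SwitchVertex K N
  | b : Fin K → Fin N → SwitchVertex K N
deriving DecidableEq

namespace SwitchVertex

variable {K N : ℕ}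

/-- The input of a subflow. -/
def inp : SwitchVertex K N → Fin K
  | u i _ => i
  | b i _ => i

/-- The output of a subflow. -/
def out : SwitchVertex K N → Fin N
  | u _ j => j
  | b _ j => j

/-- Whether a subflow is a broadcast subflow. -/
def isBroadcast : SwitchVertex K N → Prop
  | u _ _ => False
  | b _ _ => True

end SwitchVertex

/-- The enhanced conflict graph `G_{K,N}`: two distinct subflows conflict iff they
share the output, or they share the input and are not both broadcast subflows
(broadcast subflows from the same input belong to the same flow, hence do not
conflict). -/
def GKN (K N : ℕ) : SimpleGraph (SwitchVertex K N) where
  Adj a b := a ≠ b ∧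
    (a.out = b.out ∨ (a.inp = b.inp ∧ ¬ (a.isBroadcast ∧ b.isBroadcast)))
  symm := by
    constructor
    rintro a b ⟨hne, h | ⟨h1, h2⟩⟩
    · exact ⟨hne.symm, Or.inl h.symm⟩
    · exact ⟨hne.symm, Or.inr ⟨h1.symm, fun hh => h2 ⟨hh.2, hh.1⟩⟩⟩
  loopless := by constructor; rintro a ⟨hne, _⟩; exact hne rfl

/-- A graph is perfect if for every induced subgraph the chromatic number equals
the clique number. -/
def SimpleGraph.IsPerfect {V : Type*} (G : SimpleGraph V) : Prop :=
  ∀ s : Set V, (G.induce s).chromaticNumber = ((G.induce s).cliqueNum : ℕ∞)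

instance {K N : ℕ} : Finite (SwitchVertex K N) := by
  apply Finite.of_injective (fun v : SwitchVertex K N =>
    (match v with
      | .u k j => ((false, k, j) : Bool × Fin K × Fin N)
      | .b k j => (true, k, j)))
  rintro (⟨k, j⟩ | ⟨k, j⟩) (⟨k', j'⟩ | ⟨k', j'⟩) h <;> simp_all

@[simp] lemma SwitchVertex.out_u {K N : ℕ} (k : Fin K) (j : Fin N) :
    (SwitchVertex.u k j).out = j := rfl
@[simp] lemma SwitchVertex.out_b {K N : ℕ} (k : Fin K) (j : Fin N) :
    (SwitchVertex.b k j).out = j := rfl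
@[simp] lemma SwitchVertex.inp_u {K N : ℕ} (k : Fin K) (j : Fin N) :
    (SwitchVertex.u k j).inp = k := rfl
@[simp] lemma SwitchVertex.inp_b {K N : ℕ} (k : Fin K) (j : Fin N) :
    (SwitchVertex.b k j).inp = k := rfl

/-- Cyclic successor on `Fin c`, avoiding `NeZero` instance issues. -/
def finSucc {c : ℕ} (x : Fin c) : Fin c := ⟨(x.val + 1) % c, Nat.mod_lt _ x.pos⟩

lemma finSucc_inj {c : ℕ} : Function.Injective (finSucc (c := c)) := by
  intro x y h
  have hx := x.isLt
  have hy := y.isLt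
  have hval : (x.val + 1) % c = (y.val + 1) % c := congrArg Fin.val h
  apply Fin.ext
  rcases Nat.lt_or_ge (x.val + 1) c with h1 | h1 <;>
    rcases Nat.lt_or_ge (y.val + 1) c with h2 | h2
  · rw [Nat.mod_eq_of_lt h1, Nat.mod_eq_of_lt h2] at hval; omega
  · have : y.val + 1 = c := by omega
    rw [Nat.mod_eq_of_lt h1, this, Nat.mod_self] at hval; omega
  · have : x.val + 1 = c := by omega
    rw [this, Nat.mod_self, Nat.mod_eq_of_lt h2] at hval; omega
  · omega

lemma finSucc_ne {c : ℕ} (hc : 2 ≤ c) (x : Fin c) : finSucc x ≠ x := by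
  intro h
  have hval : (x.val + 1) % c = x.val := congrArg Fin.val h
  have hx := x.isLt
  rcases Nat.lt_or_ge (x.val + 1) c with h1 | h1
  · rw [Nat.mod_eq_of_lt h1] at hval; omega
  · have : x.val + 1 = c := by omega
    rw [this, Nat.mod_self] at hval; omega

open SwitchVertex in
lemma gkn_aux {K N : ℕ} (i : Fin N) {W : Type*} [Fintype W]
    (f : W → SwitchVertex K N) (hf : Function.Injective f)
    (hS : ∀ w, (f w).isBroadcast ∨ (¬ (f w).isBroadcast ∧ (f w).out = i))
    (H : SimpleGraph W)
    (hH : ∀ a b, H.Adj a b ↔ (GKN K N).Adj (f a) (f b)) :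
    H.chromaticNumber = (H.cliqueNum : ℕ∞) := by
  classical
  set c := H.cliqueNum with hc
  -- shape lemmas
  have shape : ∀ w, (f w).out ≠ i → ∃ k, f w = .b k (f w).out := by
    intro w hw
    rcases hS w with hbr | ⟨_, hout⟩
    · cases hfw : f w with
      | u k j => rw [hfw] at hbr; exact absurd hbr (by simp [isBroadcast])
      | b k j => exact ⟨k, rfl⟩
    · exact absurd hout hw
  -- cliques by output
  let B : Fin N → Finset W := fun j => Finset.univ.filter (fun w => (f w).out = j)
  have memB : ∀ j w, w ∈ B j ↔ (f w).out = j := by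
    intro j w; simp [B]
  have hBclique : ∀ j, H.IsClique (B j : Finset W) := by
    intro j a ha b hb hab
    rw [hH]
    refine ⟨fun h => hab (hf h), Or.inl ?_⟩
    rw [(memB j a).mp (Finset.mem_coe.mp ha), (memB j b).mp (Finset.mem_coe.mp hb)]
  have hBcard : ∀ j, (B j).card ≤ c :=
    fun j => SimpleGraph.IsClique.card_le_cliqueNum (tc := hBclique j)
  have pair_le : ∀ a b : W, H.Adj a b → 2 ≤ c := by
    intro a b hab
    have hcl : H.IsClique ({a, b} : Finset W) := by
      intro x hx y hy hxy
      simp only [Finset.coe_insert, Finset.coe_singleton, Set.mem_insert_iff,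
        Set.mem_singleton_iff] at hx hy
      rcases hx with rfl | rfl <;> rcases hy with rfl | rfl
      · exact absurd rfl hxy
      · exact hab
      · exact hab.symm
      · exact absurd rfl hxy
    have h2 : ({a, b} : Finset W).card = 2 := Finset.card_pair hab.ne
    have := SimpleGraph.IsClique.card_le_cliqueNum (tc := hcl)
    omega
  -- embedding for the central clique (output i)
  have hAemb : Nonempty (↥(B i) ↪ Fin c) := by
    apply Function.Embedding.nonempty_of_card_le
    rw [Fintype.card_coe, Fintype.card_fin]
    exact hBcard i
  let e : ↥(B i) ↪ Fin c := hAemb.some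
  -- matched predicate
  let Pm : W → Prop := fun w => ∃ a, f a = SwitchVertex.u (f w).inp i
  have partner_mem : ∀ w (h : Pm w), h.choose ∈ B i := by
    intro w h
    rw [memB, h.choose_spec, SwitchVertex.out_u]
  let mcol : ∀ w, Pm w → Fin c := fun w h => finSucc (e ⟨h.choose, partner_mem w h⟩)
  let M : Fin N → Finset W := fun j => (B j).filter Pm
  let U : Fin N → Finset W := fun j => (B j).filter (fun w => ¬ Pm w)
  let Used : Fin N → Finset (Fin c) := fun j =>
    (M j).attach.image (fun x => mcol x.1 (Finset.mem_filter.mp x.2).2)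
  have hUcard : ∀ j, (U j).card ≤ ((Finset.univ \ Used j) : Finset (Fin c)).card := by
    intro j
    have h1 : (M j).card + (U j).card = (B j).card :=
      Finset.card_filter_add_card_filter_not (p := Pm) (s := B j)
    have h2 : (Used j).card ≤ (M j).card :=
      le_trans (Finset.card_image_le) (by rw [Finset.card_attach])
    have h3 := hBcard j
    rw [Finset.card_sdiff_of_subset (Finset.subset_univ _), Finset.card_univ, Fintype.card_fin]
    omega
  have hUemb : ∀ j, Nonempty (↥(U j) ↪ ↥((Finset.univ \ Used j) : Finset (Fin c))) := by
    intro j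
    apply Function.Embedding.nonempty_of_card_le
    rw [Fintype.card_coe, Fintype.card_coe]
    exact hUcard j
  let uemb : ∀ j, ↥(U j) ↪ ↥((Finset.univ \ Used j) : Finset (Fin c)) :=
    fun j => (hUemb j).some
  -- the coloring
  let C : W → Fin c := fun w =>
    if hA : (f w).out = i then e ⟨w, (memB i w).mpr hA⟩
    else if hM : Pm w then mcol w hM
    else (uemb (f w).out ⟨w, Finset.mem_filter.mpr ⟨(memB _ w).mpr rfl, hM⟩⟩ : Fin c)
  -- characterizations of C
  have CA : ∀ w (h : (f w).out = i), C w = e ⟨w, (memB i w).mpr h⟩ := by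
    intro w h; simp only [C, dif_pos h]
  have CM : ∀ w (hi' : (f w).out ≠ i) (h : Pm w), C w = mcol w h := by
    intro w hi' h; simp only [C, dif_neg hi', dif_pos h]
  have CMmem : ∀ (j : Fin N) w, (f w).out = j → (f w).out ≠ i → (h : Pm w) →
      C w ∈ Used j := by
    intro j w h1 hi' h
    rw [CM w hi' h]
    have hm : w ∈ M j := Finset.mem_filter.mpr ⟨(memB j w).mpr h1, h⟩
    exact Finset.mem_image.mpr ⟨⟨w, hm⟩, Finset.mem_attach _ _, rfl⟩
  have CU : ∀ (j : Fin N) w (h1 : (f w).out = j) (hi' : j ≠ i) (h : ¬ Pm w),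
      C w = (uemb j ⟨w, Finset.mem_filter.mpr ⟨(memB j w).mpr h1, h⟩⟩ : Fin c) := by
    intro j w h1 hi' h
    subst h1
    simp only [C, dif_neg hi', dif_neg h]
  have CUnotmem : ∀ (j : Fin N) w, (f w).out = j → j ≠ i → ¬ Pm w →
      C w ∉ Used j := by
    intro j w h1 hi' h
    rw [CU j w h1 hi' h]
    have := (uemb j ⟨w, Finset.mem_filter.mpr ⟨(memB j w).mpr h1, h⟩⟩).2
    exact (Finset.mem_sdiff.mp this).2
  -- key asymmetric case: out a = i, out b ≠ i
  have key : ∀ a b : W, H.Adj a b → (f a).out = i → (f b).out ≠ i → C a ≠ C b := by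
    intro a b hab ha hb'
    obtain ⟨hne, hor⟩ := (hH a b).mp hab
    have hout : (f a).out ≠ (f b).out := by rw [ha]; exact fun h => hb' h.symm
    rcases hor with h | ⟨hinp, hnbb⟩
    · exact absurd h hout
    obtain ⟨kb, hfb⟩ := shape b hb'
    have hfa : f a = SwitchVertex.u (f a).inp i := by
      cases hfa : f a with
      | u k j =>
        have : j = i := by rw [hfa] at ha; exact ha
        subst this; rfl
      | b k j =>
        exfalso
        apply hnbb
        constructor
        · rw [hfa]; trivial
        · rw [hfb]; trivial
    have hPm : Pm b := ⟨a, by rw [hfa, hinp]⟩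
    have hchoose : hPm.choose = a := by
      apply hf
      rw [hPm.choose_spec, hfa, hinp]
    rw [CA a ha, CM b hb' hPm]
    show e ⟨a, (memB i a).mpr ha⟩ ≠ finSucc (e ⟨hPm.choose, partner_mem b hPm⟩)
    have hsub : (⟨hPm.choose, partner_mem b hPm⟩ : ↥(B i)) = ⟨a, (memB i a).mpr ha⟩ :=
      Subtype.ext hchoose
    rw [hsub]
    exact (finSucc_ne (pair_le a b hab) _).symm
  -- validity of the coloring
  have valid : ∀ ⦃a b : W⦄, H.Adj a b → C a ≠ C b := by
    intro a b hab
    obtain ⟨hne, hor⟩ := (hH a b).mp hab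
    by_cases ha : (f a).out = i <;> by_cases hb' : (f b).out = i
    · -- both in central clique
      rw [CA a ha, CA b hb']
      intro h
      exact hab.ne (congrArg Subtype.val (e.injective h))
    · exact key a b hab ha hb'
    · exact (key b a hab.symm hb' ha).symm
    · -- both outside: same output class
      have hout : (f a).out = (f b).out := by
        rcases hor with h | ⟨hinp, hnbb⟩
        · exact h
        · exfalso
          obtain ⟨ka, hfa⟩ := shape a ha
          obtain ⟨kb, hfb⟩ := shape b hb'
          exact hnbb ⟨by rw [hfa]; trivial, by rw [hfb]; trivial⟩
      set j := (f a).out with hj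
      have hbj : (f b).out = j := hout.symm
      by_cases hPa : Pm a <;> by_cases hPb : Pm b
      · -- both matched
        rw [CM a ha hPa, CM b hb' hPb]
        obtain ⟨ka, hfa⟩ := shape a ha
        obtain ⟨kb, hfb⟩ := shape b hb'
        have hkab : ka ≠ kb := by
          intro h
          apply hne
          rw [hfa, hfb, h]
          exact congrArg (SwitchVertex.b kb) hout
        have hpne : hPa.choose ≠ hPb.choose := by
          intro h
          apply hkab
          have h1 := hPa.choose_spec
          have h2 := hPb.choose_spec
          rw [h, h2] at h1
          have hia : (f a).inp = ka := by rw [hfa]; rfl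
          have hib : (f b).inp = kb := by rw [hfb]; rfl
          rw [hia, hib] at h1
          exact (SwitchVertex.u.injEq _ _ _ _ ▸ h1).1.symm
        show finSucc (e ⟨hPa.choose, partner_mem a hPa⟩) ≠
          finSucc (e ⟨hPb.choose, partner_mem b hPb⟩)
        intro h
        apply hpne
        exact congrArg Subtype.val (e.injective (finSucc_inj h))
      · -- a matched, b not
        intro h
        apply CUnotmem j b hbj ha hPb
        rw [← h]
        exact CMmem j a rfl ha hPa
      · -- b matched, a not
        intro h
        apply CUnotmem j a rfl ha hPa
        rw [h]
        exact CMmem j b hbj (hbj ▸ ha) hPb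
      · -- both unmatched
        rw [CU j a rfl ha hPa, CU j b hbj ha hPb]
        intro h
        apply hab.ne
        have := (uemb j).injective (Subtype.val_injective h)
        exact congrArg Subtype.val this
  -- conclude
  have hcol : H.Colorable c := ⟨SimpleGraph.Coloring.mk C (fun {a b} hab => valid hab)⟩
  have hne : H.chromaticNumber ≠ ⊤ :=
    SimpleGraph.chromaticNumber_ne_top_iff_exists.mpr ⟨c, hcol⟩
  have h1 : H.chromaticNumber ≤ c := hcol.chromaticNumber_le
  obtain ⟨s, hs⟩ := H.exists_isNClique_cliqueNum
  have h2 : c ≤ H.chromaticNumber.toNat := by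
    have hcol' := H.colorable_chromaticNumber_of_fintype
    calc c = s.card := hs.card_eq.symm
      _ ≤ _ := hs.isClique.card_le_of_colorable hcol'
  refine le_antisymm h1 ?_
  rw [← ENat.coe_toNat hne]
  exact_mod_cast h2

/-- The subgraph of `G_{K,N}` induced by the unicast vertices to a single output
`i` together with all broadcast subflow vertices is perfect. -/
theorem stmt8 (K N : ℕ) (i : Fin N) :
    ((GKN K N).induce
      {v : SwitchVertex K N | v.isBroadcast ∨ (¬ v.isBroadcast ∧ v.out = i)}).IsPerfect := by
  intro t
  haveI : Fintype ↥t := Fintype.ofFinite _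
  exact gkn_aux i (fun w : ↥t => (w.1.1 : SwitchVertex K N))
    (fun x y h => Subtype.ext (Subtype.ext h))
    (fun w => w.1.2)
    _
    (fun a b => Iff.rfl)
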